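/- Let P(x,y) = f_n(x)y^n + ... + f_0(x) be an irreducible polynomial over F_p of bidegree (m,n), let t divide p−1, and let Q ∈ F_p[x,y]. If P(x,y) divides Q(x,y^t), then P(x,0)^{⌊t/n⌋} divides Q(x,0) in F_p[x]. -/

import Mathlib

open MvPolynomial

/-- Evaluation of a bivariate polynomial at `y = 0`, giving a univariate polynomial in `x`. -/
noncomputable def evalY0 {F : Type*} [CommRing F] (P : MvPolynomial (Fin 2) F) : Polynomial F :=
  MvPolynomial.aeval (fun i : Fin 2 => if i = 0 then Polynomial.X else 0) P

/-- Substitution `y ↦ y^t` in a bivariate polynomial. -/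
noncomputable def subYt {F : Type*} [CommRing F] (t : ℕ) (Q : MvPolynomial (Fin 2) F) :
    MvPolynomial (Fin 2) F :=
  MvPolynomial.aeval (fun i : Fin 2 => if i = 0 then X 0 else (X 1) ^ t) Q

namespace Stmt1Aux

variable {K : Type*} [Field K]

/-- The `x`-evaluation `y = 0` as an algebra hom. -/
noncomputable def evalY0Hom (K : Type*) [Field K] :
    MvPolynomial (Fin 2) K →ₐ[K] Polynomial K :=
  MvPolynomial.aeval (fun i : Fin 2 => if i = 0 then Polynomial.X else 0)

lemma evalY0_eq (P : MvPolynomial (Fin 2) K) : evalY0 P = evalY0Hom K P := rfl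

/-- Substitution `y ↦ g·y`. -/
noncomputable def scaleY (g : K) : MvPolynomial (Fin 2) K →ₐ[K] MvPolynomial (Fin 2) K :=
  aeval (fun i : Fin 2 => if i = 0 then X 0 else C g * X 1)

lemma aeval_aeval' {A : Type*} [CommRing A] [Algebra K A] (f : Fin 2 → A)
    (g : Fin 2 → MvPolynomial (Fin 2) K) (P : MvPolynomial (Fin 2) K) :
    aeval f (aeval g P) = aeval (fun i => aeval f (g i)) P := by
  have h : (aeval f).comp (aeval g) =
      (aeval fun i => aeval f (g i) : MvPolynomial (Fin 2) K →ₐ[K] A) := by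
    apply algHom_ext; intro i; simp
  exact DFunLike.congr_fun h P

lemma aeval_congr {A : Type*} [CommRing A] [Algebra K A] {F1 F2 : Fin 2 → A}
    (h : ∀ i, F1 i = F2 i) (P : MvPolynomial (Fin 2) K) : aeval F1 P = aeval F2 P := by
  rw [funext h]

lemma scaleY_scaleY (g h : K) (P : MvPolynomial (Fin 2) K) :
    scaleY g (scaleY h P) = scaleY (g * h) P := by
  unfold scaleY
  rw [aeval_aeval']
  exact aeval_congr (fun i => by fin_cases i <;> simp [mul_comm, mul_left_comm, mul_assoc]) P

lemma scaleY_one (P : MvPolynomial (Fin 2) K) : scaleY (1 : K) P = P := by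
  unfold scaleY
  have : (fun i : Fin 2 => if i = 0 then (X 0 : MvPolynomial (Fin 2) K) else C 1 * X 1) = X := by
    funext i; fin_cases i <;> simp
  rw [this, aeval_X_left, AlgHom.id_apply]

/-- `scaleY` with an invertible scalar, as an algebra equivalence. -/
noncomputable def scaleYEquiv (g : Kˣ) :
    MvPolynomial (Fin 2) K ≃ₐ[K] MvPolynomial (Fin 2) K :=
  AlgEquiv.ofAlgHom (scaleY (g : K)) (scaleY ((g⁻¹ : Kˣ) : K))
    (AlgHom.ext fun P => by
      rw [AlgHom.comp_apply, scaleY_scaleY, Units.mul_inv, scaleY_one, AlgHom.id_apply])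
    (AlgHom.ext fun P => by
      rw [AlgHom.comp_apply, scaleY_scaleY, Units.inv_mul, scaleY_one, AlgHom.id_apply])

lemma scaleYEquiv_apply (g : Kˣ) (P : MvPolynomial (Fin 2) K) :
    scaleYEquiv g P = scaleY (g : K) P := rfl

lemma irreducible_scaleY (g : Kˣ) {P : MvPolynomial (Fin 2) K} (h : Irreducible P) :
    Irreducible (scaleY (g : K) P) := by
  rw [← scaleYEquiv_apply]
  exact (MulEquiv.irreducible_iff (scaleYEquiv g)).mpr h

lemma evalY0Hom_scaleY (g : K) (P : MvPolynomial (Fin 2) K) :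
    evalY0Hom K (scaleY g P) = evalY0Hom K P := by
  unfold evalY0Hom scaleY
  rw [aeval_aeval']
  exact aeval_congr (fun i => by fin_cases i <;> simp) P

lemma scaleY_subYt {t : ℕ} {g : K} (hg : g ^ t = 1) (Q : MvPolynomial (Fin 2) K) :
    scaleY g (subYt t Q) = subYt t Q := by
  unfold scaleY subYt
  rw [aeval_aeval']
  exact aeval_congr (fun i => by fin_cases i <;> simp [mul_pow, ← C_pow, hg]) Q

lemma evalY0Hom_subYt {t : ℕ} (ht : 0 < t) (Q : MvPolynomial (Fin 2) K) :
    evalY0Hom K (subYt t Q) = evalY0Hom K Q := by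
  unfold evalY0Hom subYt
  rw [aeval_aeval']
  exact aeval_congr (fun i => by fin_cases i <;> simp [zero_pow ht.ne']) Q

/-- The equivalence making `y` the "outer" variable. -/
noncomputable def eY (K : Type*) [Field K] :
    MvPolynomial (Fin 2) K ≃ₐ[K] Polynomial (MvPolynomial (Fin 1) K) :=
  (renameEquiv K (Equiv.swap (0 : Fin 2) 1)).trans (finSuccEquiv K 1)

lemma eY_X0 : eY K (X 0) = Polynomial.C (X 0) := by
  unfold eY
  rw [AlgEquiv.trans_apply, renameEquiv_apply, rename_X, Equiv.swap_apply_left]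
  have : (X 1 : MvPolynomial (Fin 2) K) = X (Fin.succ 0) := rfl
  rw [this, finSuccEquiv_X_succ]

lemma eY_X1 : eY K (X 1) = Polynomial.X := by
  unfold eY
  rw [AlgEquiv.trans_apply, renameEquiv_apply, rename_X, Equiv.swap_apply_right]
  exact finSuccEquiv_X_zero

lemma eY_C (a : K) : eY K (C a) = Polynomial.C (C a) := by
  have h1 : (C a : MvPolynomial (Fin 2) K) = algebraMap K _ a := rfl
  rw [h1, AlgEquiv.commutes]
  rfl

lemma natDegree_eY (P : MvPolynomial (Fin 2) K) :
    (eY K P).natDegree = degreeOf 1 P := by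
  unfold eY
  rw [AlgEquiv.trans_apply, natDegree_finSuccEquiv, renameEquiv_apply]
  have := degreeOf_rename_of_injective (p := P)
    (f := (Equiv.swap (0 : Fin 2) 1 : Fin 2 ≃ Fin 2)) (Equiv.swap 0 1).injective 1
  rw [Equiv.swap_apply_right] at this
  exact this

lemma eY_scaleY (g : K) (P : MvPolynomial (Fin 2) K) :
    eY K (scaleY g P) = (eY K P).comp (Polynomial.C (C g) * Polynomial.X) := by
  induction P using MvPolynomial.induction_on with
  | C a =>
    have : scaleY g (C a) = C a := by
      unfold scaleY
      simp [aeval_C, algebraMap_eq]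
    rw [this, eY_C, Polynomial.C_comp]
  | add p q hp hq => simp [map_add, Polynomial.add_comp, hp, hq]
  | mul_X p i hp =>
    have hXi : eY K (scaleY g (X i)) = (eY K (X i)).comp (Polynomial.C (C g) * Polynomial.X) := by
      fin_cases i
      · show eY K (scaleY g (X 0)) = (eY K (X 0)).comp (Polynomial.C (C g) * Polynomial.X)
        have h0 : scaleY g (X 0) = (X 0 : MvPolynomial (Fin 2) K) := by
          unfold scaleY; simp
        rw [h0, eY_X0, Polynomial.C_comp]
      · show eY K (scaleY g (X 1)) = (eY K (X 1)).comp (Polynomial.C (C g) * Polynomial.X)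
        have h1 : scaleY g (X 1) = C g * (X 1 : MvPolynomial (Fin 2) K) := by
          unfold scaleY; simp
        rw [h1, map_mul, eY_C, eY_X1, Polynomial.X_comp]
    rw [map_mul, map_mul, hp, hXi, ← Polynomial.mul_comp, ← map_mul]

lemma coeff_comp_C_mul_X {R : Type*} [CommRing R] (p : Polynomial R) (c : R) (k : ℕ) :
    (p.comp (Polynomial.C c * Polynomial.X)).coeff k = c ^ k * p.coeff k := by
  induction p using Polynomial.induction_on' with
  | add p q hp hq => simp [Polynomial.add_comp, hp, hq, mul_add]
  | monomial n a =>
    rw [Polynomial.monomial_comp, mul_pow, ← Polynomial.C_pow, ← mul_assoc, ← Polynomial.C_mul]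
    rw [Polynomial.coeff_C_mul, Polynomial.coeff_X_pow, Polynomial.coeff_monomial]
    by_cases h : n = k
    · subst h; simp [mul_comm]
    · simp [h, Ne.symm h]

/-- Units of a bivariate polynomial ring over a field are nonzero constants. -/
lemma isUnit_eq_C {u : MvPolynomial (Fin 2) K} (hu : IsUnit u) :
    ∃ c : K, IsUnit c ∧ u = C c := by
  have h2 : IsUnit (eY K u) := hu.map (eY K)
  obtain ⟨r, hr, hru⟩ := Polynomial.isUnit_iff.mp h2
  -- r is a unit of MvPolynomial (Fin 1) K
  let χ : MvPolynomial (Fin 1) K ≃ₐ[K] Polynomial (MvPolynomial (Fin 0) K) := finSuccEquiv K 0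
  have h3 : IsUnit (χ r) := hr.map χ
  obtain ⟨s, hs, hsr⟩ := Polynomial.isUnit_iff.mp h3
  -- s is a unit of MvPolynomial (Fin 0) K, hence a constant
  have hCs : ∀ a : K, (isEmptyAlgEquiv K (Fin 0)).symm a = C a := by
    intro a
    rw [AlgEquiv.symm_apply_eq]
    have h5 : (C a : MvPolynomial (Fin 0) K) = algebraMap K _ a := rfl
    rw [h5, AlgEquiv.commutes]
    rfl
  have hsc : s = C (isEmptyAlgEquiv K (Fin 0) s) := by
    conv_lhs => rw [← (isEmptyAlgEquiv K (Fin 0)).symm_apply_apply s]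
    rw [hCs]
  set c : K := isEmptyAlgEquiv K (Fin 0) s with hc
  have hsC : s = C c := hsc
  have hrC : r = C c := by
    have : χ (C c) = Polynomial.C s := by
      rw [hsC]
      have : (C c : MvPolynomial (Fin 1) K) = algebraMap K _ c := rfl
      rw [this, AlgEquiv.commutes]
      simp [Polynomial.algebraMap_apply, hsC, algebraMap_eq]
    have h4 : χ r = χ (C c) := by rw [this, hsr]
    exact χ.injective h4
  have huC : u = C c := by
    have : eY K (C c) = Polynomial.C r := by
      rw [eY_C, hrC]
    exact (eY K).injective (by rw [this, hru])
  refine ⟨c, ?_, huC⟩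
  have : IsUnit (C c : MvPolynomial (Fin 2) K) := huC ▸ hu
  by_contra hcu
  have hc0 : c = 0 := by
    by_contra hc0
    exact hcu (isUnit_iff_ne_zero.mpr hc0)
  rw [hc0, map_zero] at this
  exact this.ne_zero rfl

/-- Key injectivity: if two scalings of `P` are associated, the `n`-th powers agree. -/
lemma pow_eq_of_associated {P : MvPolynomial (Fin 2) K} (hP0 : P ≠ 0)
    (hf0 : evalY0Hom K P ≠ 0) {g h : K}
    (hass : Associated (scaleY g P) (scaleY h P)) :
    g ^ (degreeOf 1 P) = h ^ (degreeOf 1 P) := by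
  obtain ⟨u, hu⟩ := hass
  obtain ⟨c, hc, hcu⟩ := isUnit_eq_C u.isUnit
  rw [hcu] at hu
  -- apply evalY0Hom
  have h1 : evalY0Hom K P * Polynomial.C c = evalY0Hom K P := by
    have := congrArg (evalY0Hom K) hu
    rw [map_mul, evalY0Hom_scaleY, evalY0Hom_scaleY] at this
    have hC : evalY0Hom K (C c) = Polynomial.C c := by
      unfold evalY0Hom
      simp [aeval_C, Polynomial.algebraMap_apply]
    rw [hC] at this
    exact this
  have hc1 : c = 1 := by
    have := mul_left_cancel₀ hf0 (h1.trans (mul_one _).symm)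
    exact Polynomial.C_injective (by rw [this, map_one])
  rw [hc1, map_one, mul_one] at hu
  -- now scaleY g P = scaleY h P; compare top coefficients via eY
  set n := degreeOf 1 P with hn
  have h2 := congrArg (fun A => (eY K A).coeff n) hu
  simp only [eY_scaleY, coeff_comp_C_mul_X] at h2
  have hL : (eY K P).coeff n ≠ 0 := by
    have hne : eY K P ≠ 0 := by
      simp only [ne_eq, EmbeddingLike.map_eq_zero_iff]
      exact hP0
    have : (eY K P).coeff n = (eY K P).leadingCoeff := by
      rw [Polynomial.leadingCoeff, natDegree_eY]
    rw [this]
    exact Polynomial.leadingCoeff_ne_zero.mpr hne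
  have h3 : (C g : MvPolynomial (Fin 1) K) ^ n = (C h) ^ n :=
    mul_right_cancel₀ hL h2
  rw [← C_pow, ← C_pow] at h3
  exact C_injective _ _ h3

/-- Product of pairwise non-associated primes dividing `a` divides `a`. -/
lemma prod_dvd_of_primes {α : Type*} [CommMonoidWithZero α] [IsCancelMulZero α] {ι : Type*}
    (s : Finset ι) (f : ι → α) (a : α)
    (hp : ∀ i ∈ s, Prime (f i))
    (hd : ∀ i ∈ s, f i ∣ a)
    (hna : ∀ i ∈ s, ∀ j ∈ s, i ≠ j → ¬ Associated (f i) (f j)) :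
    (∏ i ∈ s, f i) ∣ a := by
  classical
  induction s using Finset.induction with
  | empty => simpa using one_dvd a
  | @insert i s hi ih =>
    rw [Finset.prod_insert hi]
    have hprod : (∏ j ∈ s, f j) ∣ a :=
      ih (fun j hj => hp j (Finset.mem_insert_of_mem hj))
        (fun j hj => hd j (Finset.mem_insert_of_mem hj))
        (fun j hj j' hj' hne => hna j (Finset.mem_insert_of_mem hj) j'
          (Finset.mem_insert_of_mem hj') hne)
    obtain ⟨b, rfl⟩ := hprod
    have hib : f i ∣ b := by
      have hdi := hd i (Finset.mem_insert_self i s)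
      rcases (hp i (Finset.mem_insert_self i s)).2.2 _ _ hdi with hcase | hcase
      · exfalso
        obtain ⟨j, hj, hij⟩ :=
          (Prime.dvd_finset_prod_iff (hp i (Finset.mem_insert_self i s)) f).mp hcase
        have hassoc : Associated (f i) (f j) :=
          ((hp i (Finset.mem_insert_self i s)).irreducible).associated_of_dvd
            ((hp j (Finset.mem_insert_of_mem hj)).irreducible) hij
        exact hna i (Finset.mem_insert_self i s) j (Finset.mem_insert_of_mem hj)
          (fun hij' => hi (hij' ▸ hj)) hassoc
      · exact hcase
    calc f i * ∏ j ∈ s, f j = (∏ j ∈ s, f j) * f i := mul_comm _ _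
      _ ∣ (∏ j ∈ s, f j) * b := mul_dvd_mul_left _ hib

end Stmt1Aux

open Stmt1Aux in
/-- If `P(x,y)` is irreducible of bidegree `(m,n)`, `t ∣ p − 1`, and
`P(x,y) ∣ Q(x,y^t)`, then `P(x,0)^{⌊t/n⌋} ∣ Q(x,0)` in `F_p[x]`. -/
theorem stmt1 (p : ℕ) [Fact p.Prime] (m n t : ℕ) (hn : 1 ≤ n) (ht : 0 < t)
    (hdvd : t ∣ p - 1)
    (P Q : MvPolynomial (Fin 2) (ZMod p))
    (hPirr : Irreducible P) (hPx : degreeOf 0 P = m) (hPy : degreeOf 1 P = n)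
    (hPQ : P ∣ subYt t Q) :
    (evalY0 P) ^ (t / n) ∣ evalY0 Q := by
  classical
  set K := ZMod p
  set k := t / n with hk
  rw [evalY0_eq, evalY0_eq]
  by_cases hf0 : evalY0Hom K P = 0
  · rcases Nat.eq_zero_or_pos k with hk0 | hk0
    · rw [hk0, pow_zero]
      exact one_dvd _
    · obtain ⟨R, hR⟩ := hPQ
      have hQ0 : evalY0Hom K Q = 0 := by
        have h1 := congrArg (evalY0Hom K) hR
        rw [evalY0Hom_subYt ht, map_mul, hf0, zero_mul] at h1
        exact h1
      rw [hQ0, hf0]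
      exact dvd_zero _
  · -- main case
    have hP0 : P ≠ 0 := hPirr.ne_zero
    -- find ζ of order t in Kˣ
    have hp2 : 2 ≤ p := (Fact.out : p.Prime).two_le
    have hp1 : p - 1 ≠ 0 := by omega
    obtain ⟨g0, hg0⟩ := IsCyclic.exists_ofOrder_eq_natCard (α := Kˣ)
    have hcard : Nat.card Kˣ = p - 1 := by
      rw [Nat.card_eq_fintype_card, ZMod.card_units p]
    rw [hcard] at hg0
    set ζ : Kˣ := g0 ^ ((p - 1) / t) with hζ
    have hordζ : orderOf ζ = t := by
      rw [hζ, orderOf_pow, hg0]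
      rw [Nat.gcd_eq_right (Nat.div_dvd_of_dvd hdvd)]
      exact Nat.div_div_self hdvd hp1
    have hζt : (ζ : K) ^ t = 1 := by
      have : ζ ^ t = 1 := by
        rw [← hordζ]; exact pow_orderOf_eq_one ζ
      rw [← Units.val_pow_eq_pow_val, this, Units.val_one]
    -- the family of scalings
    set f : ℕ → MvPolynomial (Fin 2) K := fun i => scaleY ((ζ : K) ^ i) P with hfdef
    have hprime : ∀ i, Prime (f i) := by
      intro i
      have : Irreducible (f i) := by
        have : ((ζ ^ i : Kˣ) : K) = (ζ : K) ^ i := by rw [Units.val_pow_eq_pow_val]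
        rw [hfdef]
        simpa [this] using irreducible_scaleY (ζ ^ i) hPirr
      exact (UniqueFactorizationMonoid.irreducible_iff_prime).mp this
    have hdvd' : ∀ i, f i ∣ subYt t Q := by
      intro i
      have h1 : scaleY ((ζ : K) ^ i) P ∣ scaleY ((ζ : K) ^ i) (subYt t Q) := map_dvd _ hPQ
      rwa [scaleY_subYt (by rw [← pow_mul, mul_comm, pow_mul, hζt, one_pow])] at h1
    -- pairwise non-associated on range k
    have hkn : k * n ≤ t := Nat.div_mul_le_self t n
    have hnonassoc : ∀ i ∈ Finset.range k, ∀ j ∈ Finset.range k, i ≠ j →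
        ¬ Associated (f i) (f j) := by
      intro i hi j hj hij hass
      apply hij
      have hpow := pow_eq_of_associated hP0 hf0 hass
      rw [hPy] at hpow
      -- ((ζ:K)^i)^n = ((ζ:K)^j)^n
      have hu : (ζ ^ (i * n) : Kˣ) = ζ ^ (j * n) := by
        apply Units.ext
        rw [Units.val_pow_eq_pow_val, Units.val_pow_eq_pow_val,
          pow_mul, pow_mul]
        exact hpow
      have hmod : (i * n) % t = (j * n) % t := by
        have := pow_eq_pow_iff_modEq.mp hu
        rwa [hordζ] at this
      have hiltn : i * n < t := by
        have : (i + 1) * n ≤ k * n :=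
          Nat.mul_le_mul_right n (Finset.mem_range.mp hi)
        have := le_trans this hkn
        nlinarith [Finset.mem_range.mp hi]
      have hjltn : j * n < t := by
        have : (j + 1) * n ≤ k * n :=
          Nat.mul_le_mul_right n (Finset.mem_range.mp hj)
        have := le_trans this hkn
        nlinarith [Finset.mem_range.mp hj]
      rw [Nat.mod_eq_of_lt hiltn, Nat.mod_eq_of_lt hjltn] at hmod
      exact Nat.eq_of_mul_eq_mul_right (by omega) hmod
    have hproddvd : (∏ i ∈ Finset.range k, f i) ∣ subYt t Q :=
      prod_dvd_of_primes _ f _ (fun i _ => hprime i) (fun i _ => hdvd' i) hnonassoc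
    -- push through evalY0Hom
    obtain ⟨R, hR⟩ := hproddvd
    have h1 := congrArg (evalY0Hom K) hR
    rw [evalY0Hom_subYt ht, map_mul, map_prod] at h1
    have h2 : ∀ i ∈ Finset.range k, evalY0Hom K (f i) = evalY0Hom K P := by
      intro i _
      rw [hfdef]
      exact evalY0Hom_scaleY _ _
    rw [Finset.prod_congr rfl h2, Finset.prod_const, Finset.card_range] at h1
    exact ⟨evalY0Hom K R, h1⟩
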